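/- Let Ω ⊆ ℝ³ be a bounded open set and let ℓ, ψ, θ : Ω → ℝ be twice continuously differentiable functions forming an orthogonal coordinate system on Ω (∇ℓ · ∇ψ = ∇ℓ · ∇θ = ∇ψ · ∇θ = 0 with Jacobian h = ∇ℓ · (∇ψ × ∇θ) nonvanishing on Ω), with |∇ℓ| = |∇ψ| on Ω and |∇θ| = |α| on Ω for a continuous function α : Ω → ℝ. Let f : ℝ → ℝ be continuous and let F : ℝ → ℝ be an antiderivative of f (F' = f). Then the vector fields w = cos(F(θ)) ∇ψ + sin(F(θ)) ∇ℓ and w* = sin(F(θ)) ∇ψ + cos(F(θ)) ∇ℓ satisfy curl w = σ|α| f(θ) w and curl w* = −σ|α| f(θ) w* on Ω, where σ(x) = h(x)/|h(x)| is the sign of the Jacobian; in particular both are Beltrami fields in Ω. -/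

import Mathlib

noncomputable section

abbrev R3 : Type := Fin 3 → ℝ

/-- Euclidean dot product on ℝ³. -/
def dot3 (u v : R3) : ℝ := u 0 * v 0 + u 1 * v 1 + u 2 * v 2

/-- Cross product on ℝ³. -/
def cross3 (u v : R3) : R3 :=
  ![u 1 * v 2 - u 2 * v 1, u 2 * v 0 - u 0 * v 2, u 0 * v 1 - u 1 * v 0]

/-- Euclidean norm on ℝ³. -/
def norm3 (u : R3) : ℝ := Real.sqrt (dot3 u u)

/-- Partial derivative of a scalar field in the `i`-th coordinate direction. -/
def pd (i : Fin 3) (f : R3 → ℝ) (x : R3) : ℝ := fderiv ℝ f x (Pi.single i 1)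

/-- Gradient of a scalar field. -/
def grad3 (f : R3 → ℝ) (x : R3) : R3 := fun i => pd i f x

/-- Curl of a vector field. -/
def curl3 (w : R3 → R3) (x : R3) : R3 :=
  ![pd 1 (fun y => w y 2) x - pd 2 (fun y => w y 1) x,
    pd 2 (fun y => w y 0) x - pd 0 (fun y => w y 2) x,
    pd 0 (fun y => w y 1) x - pd 1 (fun y => w y 0) x]

/-- Divergence of a vector field. -/
def div3 (w : R3 → R3) (x : R3) : ℝ :=
  pd 0 (fun y => w y 0) x + pd 1 (fun y => w y 1) x + pd 2 (fun y => w y 2) x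

/-- Laplacian of a scalar field. -/
def lap3 (f : R3 → ℝ) (x : R3) : ℝ := div3 (grad3 f) x

section BeltramiHelpers

lemma dot3_comm' (u v : R3) : dot3 u v = dot3 v u := by unfold dot3; ring

lemma dot3_self_nonneg' (u : R3) : 0 ≤ dot3 u u := by
  unfold dot3; nlinarith [sq_nonneg (u 0), sq_nonneg (u 1), sq_nonneg (u 2)]

lemma dot3_self_eq_sq_norm' (u : R3) : dot3 u u = norm3 u ^ 2 := by
  rw [norm3, Real.sq_sqrt (dot3_self_nonneg' u)]

lemma cross3_swap' (u v : R3) : cross3 u v = -cross3 v u := by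
  funext i; fin_cases i <;> simp [cross3] <;> ring

lemma triple_cyclic' (a b c : R3) : dot3 a (cross3 b c) = dot3 b (cross3 c a) := by
  simp [dot3, cross3]; ring

lemma lagrange' (b c : R3) :
    dot3 (cross3 b c) (cross3 b c) = dot3 b b * dot3 c c - (dot3 b c)^2 := by
  simp [dot3, cross3]; ring

lemma dot3_smul_self' (k : ℝ) (a : R3) : dot3 (k • a) (k • a) = k^2 * dot3 a a := by
  simp [dot3]; ring

lemma cross_parallel' (a b c : R3) (hab : dot3 a b = 0) (hac : dot3 a c = 0)
    (ha : dot3 a a ≠ 0) :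
    cross3 b c = (dot3 a (cross3 b c) / dot3 a a) • a := by
  funext i
  have key : cross3 b c i * dot3 a a - dot3 a (cross3 b c) * a i
      = dot3 a b * cross3 a c i - dot3 a c * cross3 a b i := by
    fin_cases i <;> simp [dot3, cross3] <;> ring
  rw [hab, hac] at key
  rw [Pi.smul_apply, smul_eq_mul, div_mul_eq_mul_div, eq_div_iff ha]
  linarith [key]

lemma cross3_zero_right' (u : R3) : cross3 u 0 = 0 := by
  funext i; fin_cases i <;> simp [cross3]

lemma dot3_zero_right' (u : R3) : dot3 u 0 = 0 := by simp [dot3]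

lemma curl_formula' (Ω : Set R3) (hΩ : IsOpen Ω)
    (ℓ ψ θ : R3 → ℝ)
    (hℓ : ContDiffOn ℝ 2 ℓ Ω) (hψ : ContDiffOn ℝ 2 ψ Ω) (hθ : ContDiffOn ℝ 2 θ Ω)
    (a b a' b' : ℝ → ℝ) (ha : ∀ t, HasDerivAt a (a' t) t) (hb : ∀ t, HasDerivAt b (b' t) t)
    (w : R3 → R3)
    (hw : ∀ x ∈ Ω, w x = a (θ x) • grad3 ψ x + b (θ x) • grad3 ℓ x)
    (x : R3) (hx : x ∈ Ω) :
    curl3 w x = a' (θ x) • cross3 (grad3 θ x) (grad3 ψ x)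
      + b' (θ x) • cross3 (grad3 θ x) (grad3 ℓ x) := by
  have hmem : Ω ∈ nhds x := hΩ.mem_nhds hx
  have hψx : ContDiffAt ℝ 2 ψ x := hψ.contDiffAt hmem
  have hℓx : ContDiffAt ℝ 2 ℓ x := hℓ.contDiffAt hmem
  have hθx : ContDiffAt ℝ 2 θ x := hθ.contDiffAt hmem
  have hθd : DifferentiableAt ℝ θ x := hθx.differentiableAt (by norm_num)
  have hsψ : ∀ u v, fderiv ℝ (fderiv ℝ ψ) x u v = fderiv ℝ (fderiv ℝ ψ) x v u :=
    fun u v => (hψx.isSymmSndFDerivAt (by norm_num)) u v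
  have hsℓ : ∀ u v, fderiv ℝ (fderiv ℝ ℓ) x u v = fderiv ℝ (fderiv ℝ ℓ) x v u :=
    fun u v => (hℓx.isSymmSndFDerivAt (by norm_num)) u v
  have hpdw : ∀ i j : Fin 3, pd i (fun y => w y j) x
      = a' (θ x) * pd i θ x * pd j ψ x
        + a (θ x) * fderiv ℝ (fderiv ℝ ψ) x (Pi.single i 1) (Pi.single j 1)
        + b' (θ x) * pd i θ x * pd j ℓ x
        + b (θ x) * fderiv ℝ (fderiv ℝ ℓ) x (Pi.single i 1) (Pi.single j 1) := by
    intro i j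
    have hev : (fun y => w y j) =ᶠ[nhds x]
        (fun y => a (θ y) * fderiv ℝ ψ y (Pi.single j 1)
          + b (θ y) * fderiv ℝ ℓ y (Pi.single j 1)) := by
      filter_upwards [hmem] with y hy
      rw [hw y hy]
      simp [grad3, pd]
    have hDa : HasFDerivAt (fun y => a (θ y)) ((a' (θ x)) • fderiv ℝ θ x) x :=
      (ha (θ x)).comp_hasFDerivAt x hθd.hasFDerivAt
    have hDb : HasFDerivAt (fun y => b (θ y)) ((b' (θ x)) • fderiv ℝ θ x) x :=
      (hb (θ x)).comp_hasFDerivAt x hθd.hasFDerivAt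
    have hF2ψ : HasFDerivAt (fderiv ℝ ψ) (fderiv ℝ (fderiv ℝ ψ) x) x :=
      ((hψx.fderiv_right (m := 1) (by norm_num)).differentiableAt (by norm_num)).hasFDerivAt
    have hF2ℓ : HasFDerivAt (fderiv ℝ ℓ) (fderiv ℝ (fderiv ℝ ℓ) x) x :=
      ((hℓx.fderiv_right (m := 1) (by norm_num)).differentiableAt (by norm_num)).hasFDerivAt
    have hDψ2 := hF2ψ.clm_apply (hasFDerivAt_const (Pi.single j 1 : R3) x)
    have hDℓ2 := hF2ℓ.clm_apply (hasFDerivAt_const (Pi.single j 1 : R3) x)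
    have htot := (hDa.mul hDψ2).add (hDb.mul hDℓ2)
    rw [pd, hev.fderiv_eq, HasFDerivAt.fderiv (f := fun y => a (θ y) * fderiv ℝ ψ y (Pi.single j 1)
      + b (θ y) * fderiv ℝ ℓ y (Pi.single j 1)) htot]
    simp [pd, ContinuousLinearMap.add_apply, ContinuousLinearMap.smul_apply,
      ContinuousLinearMap.flip_apply, ContinuousLinearMap.comp_apply,
      ContinuousLinearMap.zero_apply, smul_eq_mul]
    ring
  funext i
  fin_cases i
  · show pd 1 (fun y => w y 2) x - pd 2 (fun y => w y 1) x
      = a' (θ x) * (pd 1 θ x * pd 2 ψ x - pd 2 θ x * pd 1 ψ x)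
        + b' (θ x) * (pd 1 θ x * pd 2 ℓ x - pd 2 θ x * pd 1 ℓ x)
    rw [hpdw 1 2, hpdw 2 1, hsψ (Pi.single 2 1) (Pi.single 1 1),
      hsℓ (Pi.single 2 1) (Pi.single 1 1)]
    ring
  · show pd 2 (fun y => w y 0) x - pd 0 (fun y => w y 2) x
      = a' (θ x) * (pd 2 θ x * pd 0 ψ x - pd 0 θ x * pd 2 ψ x)
        + b' (θ x) * (pd 2 θ x * pd 0 ℓ x - pd 0 θ x * pd 2 ℓ x)
    rw [hpdw 2 0, hpdw 0 2, hsψ (Pi.single 0 1) (Pi.single 2 1),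
      hsℓ (Pi.single 0 1) (Pi.single 2 1)]
    ring
  · show pd 0 (fun y => w y 1) x - pd 1 (fun y => w y 0) x
      = a' (θ x) * (pd 0 θ x * pd 1 ψ x - pd 1 θ x * pd 0 ψ x)
        + b' (θ x) * (pd 0 θ x * pd 1 ℓ x - pd 1 θ x * pd 0 ℓ x)
    rw [hpdw 0 1, hpdw 1 0, hsψ (Pi.single 1 1) (Pi.single 0 1),
      hsℓ (Pi.single 1 1) (Pi.single 0 1)]
    ring

end BeltramiHelpers

/-- Generalized construction of Beltrami fields with an antiderivative `F` of `f`
as the angle variable. -/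
theorem beltrami_construction_antiderivative
    (Ω : Set R3) (hΩopen : IsOpen Ω) (hΩbdd : Bornology.IsBounded Ω)
    (ℓ ψ θ α : R3 → ℝ)
    (hℓ : ContDiffOn ℝ 2 ℓ Ω) (hψ : ContDiffOn ℝ 2 ψ Ω) (hθ : ContDiffOn ℝ 2 θ Ω)
    (hα : ContinuousOn α Ω)
    (horth1 : ∀ x ∈ Ω, dot3 (grad3 ℓ x) (grad3 ψ x) = 0)
    (horth2 : ∀ x ∈ Ω, dot3 (grad3 ℓ x) (grad3 θ x) = 0)
    (horth3 : ∀ x ∈ Ω, dot3 (grad3 ψ x) (grad3 θ x) = 0)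
    (hjac : ∀ x ∈ Ω, dot3 (grad3 ℓ x) (cross3 (grad3 ψ x) (grad3 θ x)) ≠ 0)
    (hnorm : ∀ x ∈ Ω, norm3 (grad3 ℓ x) = norm3 (grad3 ψ x))
    (heik : ∀ x ∈ Ω, norm3 (grad3 θ x) = |α x|)
    (f F : ℝ → ℝ) (hf : Continuous f) (hF : ∀ t, HasDerivAt F (f t) t)
    (w wstar : R3 → R3)
    (hw : ∀ x ∈ Ω,
      w x = Real.cos (F (θ x)) • grad3 ψ x + Real.sin (F (θ x)) • grad3 ℓ x)
    (hwstar : ∀ x ∈ Ω,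
      wstar x = Real.sin (F (θ x)) • grad3 ψ x + Real.cos (F (θ x)) • grad3 ℓ x) :
    ∀ x ∈ Ω,
      curl3 w x =
        ((dot3 (grad3 ℓ x) (cross3 (grad3 ψ x) (grad3 θ x)) /
            |dot3 (grad3 ℓ x) (cross3 (grad3 ψ x) (grad3 θ x))|) * |α x| * f (θ x)) • w x ∧
      curl3 wstar x =
        (-((dot3 (grad3 ℓ x) (cross3 (grad3 ψ x) (grad3 θ x)) /
            |dot3 (grad3 ℓ x) (cross3 (grad3 ψ x) (grad3 θ x))|) * |α x| * f (θ x))) •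
          wstar x := by
  intro x hx
  have hLψ : dot3 (grad3 ψ x) (grad3 ψ x) = dot3 (grad3 ℓ x) (grad3 ℓ x) := by
    rw [dot3_self_eq_sq_norm', dot3_self_eq_sq_norm', hnorm x hx]
  have hT : dot3 (grad3 θ x) (grad3 θ x) = α x ^ 2 := by
    rw [dot3_self_eq_sq_norm', heik x hx, sq_abs]
  have hLne : dot3 (grad3 ℓ x) (grad3 ℓ x) ≠ 0 := by
    intro h0
    have hz : grad3 ℓ x = 0 := by
      simp only [dot3] at h0
      have z0 : grad3 ℓ x 0 = 0 := by nlinarith [sq_nonneg (grad3 ℓ x 1), sq_nonneg (grad3 ℓ x 2)]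
      have z1 : grad3 ℓ x 1 = 0 := by nlinarith [sq_nonneg (grad3 ℓ x 0), sq_nonneg (grad3 ℓ x 2)]
      have z2 : grad3 ℓ x 2 = 0 := by nlinarith [sq_nonneg (grad3 ℓ x 0), sq_nonneg (grad3 ℓ x 1)]
      funext i; fin_cases i
      exacts [z0, z1, z2]
    apply hjac x hx
    rw [hz]
    simp only [dot3, Pi.zero_apply, zero_mul, add_zero, zero_add]
  have hαne : α x ≠ 0 := by
    intro h0
    have hz : grad3 θ x = 0 := by
      rw [h0] at hT; simp only [dot3] at hT
      have z0 : grad3 θ x 0 = 0 := by nlinarith [sq_nonneg (grad3 θ x 1), sq_nonneg (grad3 θ x 2)]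
      have z1 : grad3 θ x 1 = 0 := by nlinarith [sq_nonneg (grad3 θ x 0), sq_nonneg (grad3 θ x 2)]
      have z2 : grad3 θ x 2 = 0 := by nlinarith [sq_nonneg (grad3 θ x 0), sq_nonneg (grad3 θ x 1)]
      funext i; fin_cases i
      exacts [z0, z1, z2]
    apply hjac x hx
    rw [hz, cross3_zero_right', dot3_zero_right']
  set h := dot3 (grad3 ℓ x) (cross3 (grad3 ψ x) (grad3 θ x)) with hdefh
  set L := dot3 (grad3 ℓ x) (grad3 ℓ x) with hdefL
  have hne : h ≠ 0 := hjac x hx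
  have hcross1 : cross3 (grad3 ψ x) (grad3 θ x) = (h / L) • grad3 ℓ x :=
    cross_parallel' _ _ _ (horth1 x hx) (horth2 x hx) hLne
  have hψℓ : dot3 (grad3 ψ x) (grad3 ℓ x) = 0 := by rw [dot3_comm']; exact horth1 x hx
  have htrip : dot3 (grad3 ψ x) (cross3 (grad3 θ x) (grad3 ℓ x)) = h :=
    (triple_cyclic' (grad3 ℓ x) (grad3 ψ x) (grad3 θ x)).symm
  have hcross2 : cross3 (grad3 θ x) (grad3 ℓ x) = (h / L) • grad3 ψ x := by
    rw [cross_parallel' (grad3 ψ x) _ _ (horth3 x hx) hψℓ (by rw [hLψ]; exact hLne),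
      htrip, hLψ]
  have hLpos : 0 ≤ L := dot3_self_nonneg' _
  have hsq : h ^ 2 = (L * |α x|) ^ 2 := by
    have e1 : dot3 (cross3 (grad3 ψ x) (grad3 θ x)) (cross3 (grad3 ψ x) (grad3 θ x))
        = L * α x ^ 2 := by
      rw [lagrange', hLψ, hT, horth3 x hx]; ring
    have e2 : dot3 (cross3 (grad3 ψ x) (grad3 θ x)) (cross3 (grad3 ψ x) (grad3 θ x))
        = (h / L) ^ 2 * L := by rw [hcross1, dot3_smul_self']
    have e3 : (h / L) ^ 2 * L = L * α x ^ 2 := by rw [← e2, e1]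
    have : h ^ 2 = L ^ 2 * α x ^ 2 := by
      field_simp at e3
      have e4 : h ^ 2 * L = (L ^ 2 * α x ^ 2) * L := by linear_combination L * e3
      exact mul_right_cancel₀ hLne e4
    rw [this, mul_pow, sq_abs]
  have habs : |h| = L * |α x| :=
    calc |h| = Real.sqrt (h ^ 2) := (Real.sqrt_sq_eq_abs h).symm
      _ = Real.sqrt ((L * |α x|) ^ 2) := by rw [hsq]
      _ = abs (L * |α x|) := Real.sqrt_sq_eq_abs _
      _ = L * |α x| := abs_of_nonneg (by positivity)
  have hσ : h / L = h / |h| * |α x| := by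
    rw [habs]
    have hane : |α x| ≠ 0 := abs_ne_zero.mpr hαne
    field_simp
  have hc1 := curl_formula' Ω hΩopen ℓ ψ θ hℓ hψ hθ
    (fun t => Real.cos (F t)) (fun t => Real.sin (F t))
    (fun t => -Real.sin (F t) * f t) (fun t => Real.cos (F t) * f t)
    (fun t => (Real.hasDerivAt_cos (F t)).comp t (hF t))
    (fun t => (Real.hasDerivAt_sin (F t)).comp t (hF t)) w hw x hx
  have hc2 := curl_formula' Ω hΩopen ℓ ψ θ hℓ hψ hθ
    (fun t => Real.sin (F t)) (fun t => Real.cos (F t))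
    (fun t => Real.cos (F t) * f t) (fun t => -Real.sin (F t) * f t)
    (fun t => (Real.hasDerivAt_sin (F t)).comp t (hF t))
    (fun t => (Real.hasDerivAt_cos (F t)).comp t (hF t)) wstar hwstar x hx
  rw [cross3_swap' (grad3 θ x) (grad3 ψ x), hcross1, hcross2, hσ] at hc1 hc2
  constructor
  · rw [hc1, hw x hx]
    funext i
    simp only [Pi.add_apply, Pi.smul_apply, Pi.neg_apply, smul_eq_mul, neg_mul, mul_neg]
    ring
  · rw [hc2, hwstar x hx]
    funext i
    simp only [Pi.add_apply, Pi.smul_apply, Pi.neg_apply, smul_eq_mul, neg_mul, mul_neg]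
    ring
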